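/- arXiv:1707.03923 — 5 statements merged into one kernel-verified Lean document; each statement's English description precedes it below -/
import Mathlib

section
/- Let 𝔽 be a field, σ a field automorphism of 𝔽, G a finite group, P ≤ G a subgroup, and N a finite-dimensional 𝔽P-module. Then the map φ : 𝔉_P^G(N)^σ → 𝔉_P^G(N^σ), defined by φ(f^σ)(a) := f(ι₀(a))^σ for all a ∈ 𝔽G and f ∈ 𝔉_P^G(N), is an isomorphism of 𝔽G-modules, where the domain is the σ-twist of the coinduced module regarded as an 𝔽G-module via ι₀^σ. -/
section Coinduced

variable {𝔽 : Type*} [Field 𝔽] {G : Type*} [Group G] (P : Subgroup G)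
variable {N : Type*} [AddCommGroup N] [Module 𝔽 N]

/-- Concrete model of the coinduced module `𝔉_P^G(N) = Hom_{𝔽P}(𝔽G, N)`: an `𝔽P`-linear map
`𝔽G → N` is uniquely determined by its values on the basis `G`, i.e. by a function `f : G → N`
satisfying `f (p * g) = p • f g` for `p ∈ P`. -/
def coinducedModule (ν : Representation 𝔽 P N) : Submodule 𝔽 (G → N) where
  carrier := {f | ∀ (p : P) (g : G), f (↑p * g) = ν p (f g)}
  add_mem' := by
    intro f g hf hg p x
    simp only [Pi.add_apply, hf p x, hg p x, map_add]
  zero_mem' := by intro p x; simp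
  smul_mem' := by
    intro c f hf p x
    simp only [Pi.smul_apply, hf p x, map_smul]

/-- The `𝔽G`-module structure on the coinduced module, `(a • f) x = f (x a)`, as a
representation of `G`. -/
def coinducedRep (ν : Representation 𝔽 P N) :
    Representation 𝔽 G (coinducedModule P ν) where
  toFun g :=
    { toFun := fun f => ⟨fun x => (f : G → N) (x * g), fun p x => by
        simpa [mul_assoc] using f.2 p (x * g)⟩
      map_add' := fun f₁ f₂ => by ext x; rfl
      map_smul' := fun c f => by ext x; rfl }
  map_one' := by
    ext f x
    simp
  map_mul' := fun g₁ g₂ => by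
    ext f x
    simp [mul_assoc]

end Coinduced

/-- The `σ⁻¹`-semilinear ring automorphism `ι₀` of the group algebra `𝔽G`, applying `σ⁻¹` to
every coefficient. -/
noncomputable def iotaZero {𝔽 : Type*} [Field 𝔽] (σ : 𝔽 ≃+* 𝔽) {G : Type*} [Group G]
    (a : MonoidAlgebra 𝔽 G) : MonoidAlgebra 𝔽 G :=
  MonoidAlgebra.ofCoeff (Finsupp.mapRange σ.symm (map_zero σ.symm) a.coeff)

/-- Let `σ` be an automorphism of the field `𝔽`, `G` a finite group, `P ≤ G` and `N` a
finite-dimensional `𝔽P`-module (a representation `ν` of `P`), with `σ`-twist `N^σ` (the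
representation `ν'` on `N'`, via the `σ`-semilinear isomorphism `u : N → N'`).  Then
`φ : 𝔉_P^G(N)^σ → 𝔉_P^G(N^σ)`, `φ(f^σ)(a) = f(ι₀ a)^σ`, is an isomorphism of `𝔽G`-modules,
where the domain is the `σ`-twist of the coinduced module regarded as an `𝔽G`-module via
`ι₀^σ`: i.e. there is an additive bijection `Φ` of the coinduced modules with
`Φ (ι₀(a) • f) = a • Φ f` for all `a ∈ 𝔽G` and `(Φ f)(g) = u (f g)` for all `g ∈ G`. -/
theorem coinduced_sigma_twist
    {𝔽 : Type*} [Field 𝔽] (σ : 𝔽 ≃+* 𝔽)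
    {G : Type*} [Group G] [Finite G] (P : Subgroup G)
    {N N' : Type*} [AddCommGroup N] [Module 𝔽 N] [FiniteDimensional 𝔽 N]
    [AddCommGroup N'] [Module 𝔽 N']
    (ν : Representation 𝔽 P N) (ν' : Representation 𝔽 P N')
    (u : N ≃+ N') (hu : ∀ (α : 𝔽) (x : N), u (α • x) = σ α • u x)
    (hν' : ∀ (p : P) (x : N), ν' p (u x) = u (ν p x)) :
    ∃ Φ : (coinducedRep P ν).asModule ≃+ (coinducedRep P ν').asModule,
      (∀ (a : MonoidAlgebra 𝔽 G) (f : (coinducedRep P ν).asModule),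
        Φ (iotaZero σ a • f) = a • Φ f)
      ∧ (∀ (f : (coinducedRep P ν).asModule) (g : G),
          (((coinducedRep P ν').asModuleEquiv (Φ f) : coinducedModule P ν') : G → N') g
            = u ((((coinducedRep P ν).asModuleEquiv f : coinducedModule P ν) : G → N) g)) := by

  classical
  -- the additive equivalence between the underlying coinduced modules
  let e : coinducedModule P ν ≃+ coinducedModule P ν' :=
    { toFun := fun f => ⟨fun g => u ((f : G → N) g), fun p g => by
        simp [f.2 p g, hν']⟩
      invFun := fun f => ⟨fun g => u.symm ((f : G → N') g), fun p g => by
        have := f.2 p g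
        have h2 : ν' p ((f : G → N') g) = u (ν p (u.symm ((f : G → N') g))) := by
          simpa using hν' p (u.symm ((f : G → N') g))
        simp [this, h2]⟩
      left_inv := fun f => by ext g; simp
      right_inv := fun f => by ext g; simp
      map_add' := fun f₁ f₂ => by ext g; simp }
  refine ⟨((coinducedRep P ν).asModuleEquiv.toAddEquiv.trans e).trans
      (coinducedRep P ν').asModuleEquiv.symm.toAddEquiv, ?_, fun f g => rfl⟩
  intro a f
  apply (coinducedRep P ν').asModuleEquiv.injective
  induction a using MonoidAlgebra.induction_linear with
  | zero =>
      simp [iotaZero]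
  | add a b ha hb =>
      have : iotaZero σ (a + b) = iotaZero σ a + iotaZero σ b := by
        simp [iotaZero, MonoidAlgebra.coeff_add, Finsupp.mapRange_add, MonoidAlgebra.ofCoeff_add]
      simp only [this, add_smul, map_add, ha, hb]
  | single g α =>
      have hι : iotaZero σ (MonoidAlgebra.single g α) = MonoidAlgebra.single g (σ.symm α) := by
        simp [iotaZero, MonoidAlgebra.coeff_single, Finsupp.mapRange_single, MonoidAlgebra.ofCoeff_single]
      rw [hι]
      simp only [AddEquiv.trans_apply, AddEquiv.apply_symm_apply, LinearEquiv.coe_toAddEquiv,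
        LinearEquiv.coe_addEquiv_apply, LinearEquiv.apply_symm_apply,
        Representation.asModuleEquiv_map_smul, Representation.asAlgebraHom_single]
      ext x
      show u ((σ.symm α • ((coinducedRep P ν) g ((coinducedRep P ν).asModuleEquiv f) : G → N)) x)
        = (α • ((coinducedRep P ν') g
            (e ((coinducedRep P ν).asModuleEquiv f)) : G → N')) x
      simp only [Pi.smul_apply, hu, RingEquiv.apply_symm_apply]
      rfl
end

section
/- Let 𝔽 be a field, σ a field automorphism of 𝔽, G a finite group, P ≤ G a subgroup, and N a finite-dimensional 𝔽P-module. Then there is an isomorphism of 𝔽-algebras ι : End_{𝔽G}(𝔉_P^G(N))^σ → End_{𝔽G}(𝔉_P^G(N^σ)) determined by ι(B^σ)(φ(f^σ)) = φ((Bf)^σ) for all B ∈ End_{𝔽G}(𝔉_P^G(N)) and f ∈ 𝔉_P^G(N), where φ : 𝔉_P^G(N)^σ → 𝔉_P^G(N^σ) is the 𝔽G-module isomorphism φ(f^σ)(a) = f(ι₀(a))^σ. -/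
section Aux

variable {𝔽 : Type*} [Field 𝔽] {G : Type*} [Group G] (P : Subgroup G)
variable {N N' : Type*} [AddCommGroup N] [Module 𝔽 N] [AddCommGroup N'] [Module 𝔽 N']

/-- Pointwise application of `u` gives an additive equivalence between coinduced modules. -/
def twistCoinduced (ν : Representation 𝔽 P N) (ν' : Representation 𝔽 P N')
    (u : N ≃+ N') (hν' : ∀ (p : P) (x : N), ν' p (u x) = u (ν p x)) :
    coinducedModule P ν ≃+ coinducedModule P ν' where
  toFun f := ⟨fun g => u (f.1 g), fun p g => by
    show u (f.1 (↑p * g)) = ν' p (u (f.1 g))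
    rw [f.2 p g, hν']⟩
  invFun f := ⟨fun g => u.symm (f.1 g), fun p g => by
    show u.symm (f.1 (↑p * g)) = ν p (u.symm (f.1 g))
    rw [f.2 p g, u.symm_apply_eq, ← hν', u.apply_symm_apply]⟩
  left_inv f := Subtype.ext (funext fun g => by simp)
  right_inv f := Subtype.ext (funext fun g => by simp)
  map_add' f₁ f₂ := Subtype.ext (funext fun g => by simp)

end Aux

/-- Let `σ` be an automorphism of the field `𝔽`, `G` a finite group, `P ≤ G` and `N` a
finite-dimensional `𝔽P`-module (a representation `ν` of `P`) with `σ`-twist `N^σ` (the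
representation `ν'` on `N'`, via the `σ`-semilinear isomorphism `u : N → N'`).  Then there is an
`𝔽`-algebra isomorphism `ι : End_{𝔽G}(𝔉_P^G(N))^σ → End_{𝔽G}(𝔉_P^G(N^σ))`, i.e. a ring
isomorphism of the endomorphism algebras which is `σ`-semilinear over `𝔽` and satisfies
`ι(B^σ)(φ(f^σ)) = φ((Bf)^σ)`, where `φ(f^σ) = u ∘ f` is the identification
`𝔉_P^G(N)^σ ≅ 𝔉_P^G(N^σ)`. -/
theorem coinduced_end_sigma_twist
    {𝔽 : Type*} [Field 𝔽] (σ : 𝔽 ≃+* 𝔽)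
    {G : Type*} [Group G] [Finite G] (P : Subgroup G)
    {N N' : Type*} [AddCommGroup N] [Module 𝔽 N] [FiniteDimensional 𝔽 N]
    [AddCommGroup N'] [Module 𝔽 N']
    (ν : Representation 𝔽 P N) (ν' : Representation 𝔽 P N')
    (u : N ≃+ N') (hu : ∀ (α : 𝔽) (x : N), u (α • x) = σ α • u x)
    (hν' : ∀ (p : P) (x : N), ν' p (u x) = u (ν p x)) :
    ∃ ι : Module.End (MonoidAlgebra 𝔽 G) (coinducedRep P ν).asModule ≃+*
          Module.End (MonoidAlgebra 𝔽 G) (coinducedRep P ν').asModule,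
      (∀ (α : 𝔽) (B B₂ : Module.End (MonoidAlgebra 𝔽 G) (coinducedRep P ν).asModule),
        (∀ m, B₂ m = algebraMap 𝔽 (MonoidAlgebra 𝔽 G) α • B m) →
        ∀ m', ι B₂ m' = algebraMap 𝔽 (MonoidAlgebra 𝔽 G) (σ α) • ι B m')
      ∧ (∀ (B : Module.End (MonoidAlgebra 𝔽 G) (coinducedRep P ν).asModule)
          (f : (coinducedRep P ν).asModule) (f' : (coinducedRep P ν').asModule),
          (∀ g : G, (((coinducedRep P ν').asModuleEquiv f' : coinducedModule P ν') : G → N') g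
              = u ((((coinducedRep P ν).asModuleEquiv f : coinducedModule P ν) : G → N) g)) →
          ∀ g : G,
            (((coinducedRep P ν').asModuleEquiv (ι B f') : coinducedModule P ν') : G → N') g
              = u ((((coinducedRep P ν).asModuleEquiv (B f) : coinducedModule P ν) : G → N) g)) := by
  classical
  set U := twistCoinduced P ν ν' u hν' with hUdef
  let e : (coinducedRep P ν).asModule ≃+ (coinducedRep P ν').asModule :=
    ((coinducedRep P ν).asModuleEquiv.toAddEquiv.trans U).trans (coinducedRep P ν').asModuleEquiv.symm.toAddEquiv
  have he : ∀ m, (coinducedRep P ν').asModuleEquiv (e m)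
      = U ((coinducedRep P ν).asModuleEquiv m) := fun m =>
    (coinducedRep P ν').asModuleEquiv.apply_symm_apply _
  have hUsmul : ∀ (α : 𝔽) (g : G) (f : coinducedModule P ν),
      U (α • (coinducedRep P ν g) f) = σ α • (coinducedRep P ν' g) (U f) := by
    intro α g f
    apply Subtype.ext; funext x
    exact hu α _
  have key : ∀ (g : G) (α : 𝔽) (m : (coinducedRep P ν).asModule),
      e (MonoidAlgebra.single g α • m) = MonoidAlgebra.single g (σ α) • e m := by
    intro g α m
    apply (coinducedRep P ν').asModuleEquiv.injective
    rw [he, (coinducedRep P ν).asModuleEquiv_map_smul,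
        (coinducedRep P ν').asModuleEquiv_map_smul,
        Representation.asAlgebraHom_single, Representation.asAlgebraHom_single,
        LinearMap.smul_apply, LinearMap.smul_apply, he]
    exact hUsmul α g _
  have key_symm : ∀ (g : G) (α : 𝔽) (m' : (coinducedRep P ν').asModule),
      e.symm (MonoidAlgebra.single g α • m') = MonoidAlgebra.single g (σ.symm α) • e.symm m' := by
    intro g α m'
    apply e.injective
    rw [e.apply_symm_apply, key, RingEquiv.apply_symm_apply, e.apply_symm_apply]
  have smul_lemma : ∀ (B : Module.End (MonoidAlgebra 𝔽 G) (coinducedRep P ν).asModule)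
      (r : MonoidAlgebra 𝔽 G) (m' : (coinducedRep P ν').asModule),
      e (B (e.symm (r • m'))) = r • e (B (e.symm m')) := by
    intro B r m'
    induction r using MonoidAlgebra.induction with
    | zero => simp
    | single_add g α s _ _ ih =>
        rw [add_smul, add_smul, map_add, map_add, map_add, ih]
        congr 1
        rw [key_symm, B.map_smul, key, RingEquiv.apply_symm_apply]
  have smul_lemma' : ∀ (B' : Module.End (MonoidAlgebra 𝔽 G) (coinducedRep P ν').asModule)
      (r : MonoidAlgebra 𝔽 G) (m : (coinducedRep P ν).asModule),
      e.symm (B' (e (r • m))) = r • e.symm (B' (e m)) := by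
    intro B' r m
    induction r using MonoidAlgebra.induction with
    | zero => simp
    | single_add g α s _ _ ih =>
        rw [add_smul, add_smul, map_add, map_add, map_add, ih]
        congr 1
        rw [key, B'.map_smul, key_symm, RingEquiv.symm_apply_apply]
  refine ⟨{
      toFun := fun B =>
        { toFun := fun m' => e (B (e.symm m'))
          map_add' := fun x y => by simp
          map_smul' := fun r m' => smul_lemma B r m' }
      invFun := fun B' =>
        { toFun := fun m => e.symm (B' (e m))
          map_add' := fun x y => by simp
          map_smul' := fun r m => smul_lemma' B' r m }
      left_inv := fun B => by ext m; simp
      right_inv := fun B' => by ext m'; simp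
      map_mul' := fun B C => by ext m'; simp [Module.End.mul_apply]
      map_add' := fun B C => by ext m'; simp }, ?_, ?_⟩
  · intro α B B₂ h m'
    have halg : ∀ β : 𝔽, algebraMap 𝔽 (MonoidAlgebra 𝔽 G) β = MonoidAlgebra.single (1 : G) β :=
      fun β => rfl
    show e (B₂ (e.symm m')) = _ • e (B (e.symm m'))
    rw [h, halg, halg, key]
  · intro B f f' hf g
    have hf' : f' = e f := by
      apply (coinducedRep P ν').asModuleEquiv.injective
      apply Subtype.ext; funext x
      rw [he]
      exact hf x
    rw [hf']
    show (((coinducedRep P ν').asModuleEquiv (e (B (e.symm (e f))))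
        : coinducedModule P ν') : G → N') g = _
    rw [e.symm_apply_apply, he]
    rfl
end

section
/- Let 𝔽 be a field, σ a field automorphism of 𝔽, G a finite group, P ≤ G a subgroup, and N a finite-dimensional 𝔽P-module such that 𝔉_P^G(N) is a semisimple 𝔽G-module. Let S be a simple 𝔽G-submodule of 𝔉_P^G(N). Then there is an isomorphism φ : ℋ_N(S)^σ → ℋ_{N^σ}(S^σ) of ℋ_G(P, N^σ)-modules, where ℋ_N(S)^σ is regarded as an ℋ_G(P, N^σ)-module via the algebra isomorphism ℋ_G(P,N)^σ ≅ ℋ_G(P,N^σ), and S^σ is regarded as a simple 𝔽G-submodule of 𝔉_P^G(N^σ) via the identification 𝔉_P^G(N)^σ ≅ 𝔉_P^G(N^σ). -/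
section Coinduced

variable {𝔽 : Type*} [Field 𝔽] {G : Type*} [Group G] (P : Subgroup G)
variable {N : Type*} [AddCommGroup N] [Module 𝔽 N]

instance (ν : Representation 𝔽 P N) : AddCommGroup (coinducedRep P ν).asModule :=
  inferInstanceAs (AddCommGroup (coinducedModule P ν))

end Coinduced

noncomputable section AuxTwist

open Representation

variable {𝔽 : Type*} [Field 𝔽] {G : Type*} [Group G] (P : Subgroup G)
variable {N : Type*} [AddCommGroup N] [Module 𝔽 N]
variable (ν : Representation 𝔽 P N)

/-- The value function of an element of the coinduced module (as a `MonoidAlgebra`-module). -/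
def cval (m : (coinducedRep P ν).asModule) : G → N :=
  fun g => (((coinducedRep P ν).asModuleEquiv m : coinducedModule P ν) : G → N) g

lemma cval_inj {m₁ m₂ : (coinducedRep P ν).asModule}
    (h : ∀ g, cval P ν m₁ g = cval P ν m₂ g) : m₁ = m₂ := by
  apply (coinducedRep P ν).asModuleEquiv.injective
  exact Subtype.ext (funext h)

lemma cval_prop (m : (coinducedRep P ν).asModule) (p : P) (g : G) :
    cval P ν m (↑p * g) = ν p (cval P ν m g) :=
  ((coinducedRep P ν).asModuleEquiv m).2 p g

lemma cval_add (m₁ m₂ : (coinducedRep P ν).asModule) (g : G) :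
    cval P ν (m₁ + m₂) g = cval P ν m₁ g + cval P ν m₂ g := by
  simp [cval, map_add]

lemma cval_zero (g : G) : cval P ν (0 : (coinducedRep P ν).asModule) g = 0 := by
  simp [cval, map_zero]

lemma cval_single_smul (g₀ : G) (α : 𝔽) (m : (coinducedRep P ν).asModule) (g : G) :
    cval P ν (MonoidAlgebra.single g₀ α • m) g = α • cval P ν m (g * g₀) := by
  show (((coinducedRep P ν).asModuleEquiv (MonoidAlgebra.single g₀ α • m) :
      coinducedModule P ν) : G → N) g = _
  rw [Representation.asModuleEquiv_map_smul, Representation.asAlgebraHom_single]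
  rfl

lemma cval_algebraMap_smul (α : 𝔽) (m : (coinducedRep P ν).asModule) (g : G) :
    cval P ν (algebraMap 𝔽 (MonoidAlgebra 𝔽 G) α • m) g = α • cval P ν m g := by
  show (((coinducedRep P ν).asModuleEquiv (algebraMap 𝔽 (MonoidAlgebra 𝔽 G) α • m) :
      coinducedModule P ν) : G → N) g = _
  rw [Representation.asModuleEquiv_map_smul, AlgHom.commutes]
  rfl

/-- Coefficientwise application of `σ` to the monoid algebra. -/
def twistAlg (σ : 𝔽 ≃+* 𝔽) (a : MonoidAlgebra 𝔽 G) : MonoidAlgebra 𝔽 G :=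
  MonoidAlgebra.ofCoeff (Finsupp.mapRange σ σ.map_zero a.coeff)

lemma twistAlg_twistAlg (σ : 𝔽 ≃+* 𝔽) (a : MonoidAlgebra 𝔽 G) :
    twistAlg σ (twistAlg σ.symm a) = a := by
  ext g
  simp [twistAlg]

lemma twistAlg_twistAlg' (σ : 𝔽 ≃+* 𝔽) (a : MonoidAlgebra 𝔽 G) :
    twistAlg σ.symm (twistAlg σ a) = a := by
  ext g
  simp [twistAlg]

lemma twistAlg_single (σ : 𝔽 ≃+* 𝔽) (g₀ : G) (α : 𝔽) :
    twistAlg σ (MonoidAlgebra.single g₀ α) = MonoidAlgebra.single g₀ (σ α) :=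
  congrArg MonoidAlgebra.ofCoeff (Finsupp.mapRange_single (f := σ))

lemma twistAlg_add (σ : 𝔽 ≃+* 𝔽) (a b : MonoidAlgebra 𝔽 G) :
    twistAlg σ (a + b) = twistAlg σ a + twistAlg σ b :=
  congrArg MonoidAlgebra.ofCoeff (Finsupp.mapRange_add σ.map_add a.coeff b.coeff)

lemma twistAlg_zero (σ : 𝔽 ≃+* 𝔽) : twistAlg σ (0 : MonoidAlgebra 𝔽 G) = 0 :=
  congrArg MonoidAlgebra.ofCoeff Finsupp.mapRange_zero

variable (σ : 𝔽 ≃+* 𝔽)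
variable {N' : Type*} [AddCommGroup N'] [Module 𝔽 N'] (ν' : Representation 𝔽 P N')

/-- Generic helper: an additive map `w : N →+ N'` intertwining `ν` and `ν'` induces a map
of coinduced modules, `(U m) g = w (m g)`. -/
def UmapFun (w : N →+ N') (hw : ∀ (p : P) (x : N), w (ν p x) = ν' p (w x))
    (m : (coinducedRep P ν).asModule) : (coinducedRep P ν').asModule :=
  (coinducedRep P ν').asModuleEquiv.symm
    ⟨fun g => w (cval P ν m g), fun p g => by
      show w (cval P ν m (↑p * g)) = ν' p (w (cval P ν m g))
      rw [cval_prop, hw]⟩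

lemma cval_UmapFun (w : N →+ N') (hw : ∀ (p : P) (x : N), w (ν p x) = ν' p (w x))
    (m : (coinducedRep P ν).asModule) (g : G) :
    cval P ν' (UmapFun P ν ν' w hw m) g = w (cval P ν m g) := by
  show (((coinducedRep P ν').asModuleEquiv ((coinducedRep P ν').asModuleEquiv.symm _) :
      coinducedModule P ν') : G → N') g = _
  exact congrArg (fun x : coinducedModule P ν' => (x : G → N') g)
    ((coinducedRep P ν').asModuleEquiv.apply_symm_apply _)

variable (u : N ≃+ N') (hu : ∀ (α : 𝔽) (x : N), u (α • x) = σ α • u x)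
variable (hν' : ∀ (p : P) (x : N), ν' p (u x) = u (ν p x))

/-- The σ-semilinear additive equivalence `𝔉(N) ≃+ 𝔉(N')`, `(U m) g = u (m g)`. -/
def Umap : (coinducedRep P ν).asModule ≃+ (coinducedRep P ν').asModule where
  toFun := UmapFun P ν ν' u.toAddMonoidHom (fun p x => (hν' p x).symm)
  invFun := UmapFun P ν' ν u.symm.toAddMonoidHom (fun p x => by
    apply u.injective
    show u (u.symm (ν' p x)) = u (ν p (u.symm x))
    rw [← hν', u.apply_symm_apply, u.apply_symm_apply])
  left_inv m := by
    apply cval_inj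
    intro g
    exact (cval_UmapFun P ν' ν u.symm.toAddMonoidHom _ _ g).trans
      ((congrArg u.symm.toAddMonoidHom (cval_UmapFun P ν ν' u.toAddMonoidHom _ m g)).trans
        (u.symm_apply_apply _))
  right_inv m' := by
    apply cval_inj
    intro g
    exact (cval_UmapFun P ν ν' u.toAddMonoidHom _ _ g).trans
      ((congrArg u.toAddMonoidHom (cval_UmapFun P ν' ν u.symm.toAddMonoidHom _ m' g)).trans
        (u.apply_symm_apply _))
  map_add' m₁ m₂ := by
    apply cval_inj
    intro g
    rw [cval_add]
    exact (cval_UmapFun P ν ν' u.toAddMonoidHom _ _ g).trans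
      ((congrArg u.toAddMonoidHom (cval_add P ν m₁ m₂ g)).trans ((map_add _ _ _).trans
        (congrArg₂ (· + ·) (cval_UmapFun P ν ν' u.toAddMonoidHom _ m₁ g).symm
          (cval_UmapFun P ν ν' u.toAddMonoidHom _ m₂ g).symm)))

lemma cval_Umap (m : (coinducedRep P ν).asModule) (g : G) :
    cval P ν' (Umap P ν ν' u hν' m) g = u (cval P ν m g) :=
  cval_UmapFun P ν ν' u.toAddMonoidHom (fun p x => (hν' p x).symm) m g

include hu in
lemma Umap_smul (a : MonoidAlgebra 𝔽 G) (m : (coinducedRep P ν).asModule) :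
    Umap P ν ν' u hν' (a • m) = twistAlg σ a • Umap P ν ν' u hν' m := by
  apply cval_inj
  intro g
  rw [cval_Umap]
  induction a using MonoidAlgebra.induction_linear with
  | zero => rw [zero_smul, twistAlg_zero, zero_smul, cval_zero, map_zero, cval_zero]
  | add f₁ f₂ h₁ h₂ =>
      rw [twistAlg_add, add_smul, add_smul, cval_add, cval_add, map_add, h₁, h₂]
  | single g₀ α =>
      rw [twistAlg_single, cval_single_smul, cval_single_smul, hu, cval_Umap]

include hu in
lemma Umap_symm_smul (a : MonoidAlgebra 𝔽 G) (m' : (coinducedRep P ν').asModule) :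
    (Umap P ν ν' u hν').symm (a • m') =
      twistAlg σ.symm a • (Umap P ν ν' u hν').symm m' := by
  apply (Umap P ν ν' u hν').injective
  rw [AddEquiv.apply_symm_apply, Umap_smul P ν σ ν' u hu hν', twistAlg_twistAlg,
    AddEquiv.apply_symm_apply]

end AuxTwist


set_option maxHeartbeats 2000000 in
set_option synthInstance.maxHeartbeats 1000000 in
/-- Let `σ` be an automorphism of the field `𝔽`, `G` a finite group, `P ≤ G` and `N` a
finite-dimensional `𝔽P`-module (a representation `ν` of `P`) with `σ`-twist `N^σ` (the
representation `ν'` on `N'`, via the `σ`-semilinear isomorphism `u : N → N'`).  Suppose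
`𝔉_P^G(N)` is a semisimple `𝔽G`-module and `S` is a simple `𝔽G`-submodule of `𝔉_P^G(N)`, with
image `S^σ = S'` in `𝔉_P^G(N^σ)` under the identification `𝔉_P^G(N)^σ ≅ 𝔉_P^G(N^σ)`.  Then
there is an isomorphism `φ : ℋ_N(S)^σ → ℋ_{N^σ}(S^σ)` of `ℋ_G(P,N^σ)`-modules: an additive
bijection `Ψ : Hom_{𝔽G}(𝔉_P^G(N), S) → Hom_{𝔽G}(𝔉_P^G(N^σ), S^σ)` which is `σ`-semilinear
over `𝔽`, satisfies `Ψ f (φ m) = φ (f m)`, and intertwines the Hecke-algebra actions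
`B • f = f ∘ B` via the isomorphism `ℋ_G(P,N) ≅ ℋ_G(P,N^σ)`, `B ↦ B'`. -/
theorem hecke_module_sigma_twist
    {𝔽 : Type*} [Field 𝔽] (σ : 𝔽 ≃+* 𝔽)
    {G : Type*} [Group G] [Finite G] (P : Subgroup G)
    {N N' : Type*} [AddCommGroup N] [Module 𝔽 N] [FiniteDimensional 𝔽 N]
    [AddCommGroup N'] [Module 𝔽 N']
    (ν : Representation 𝔽 P N) (ν' : Representation 𝔽 P N')
    (u : N ≃+ N') (hu : ∀ (α : 𝔽) (x : N), u (α • x) = σ α • u x)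
    (hν' : ∀ (p : P) (x : N), ν' p (u x) = u (ν p x))
    (hss : IsSemisimpleModule (MonoidAlgebra 𝔽 G) (coinducedRep P ν).asModule)
    (S : Submodule (MonoidAlgebra 𝔽 G) (coinducedRep P ν).asModule)
    (hS : IsSimpleModule (MonoidAlgebra 𝔽 G) S)
    (S' : Submodule (MonoidAlgebra 𝔽 G) (coinducedRep P ν').asModule)
    (hS' : ∀ y : (coinducedRep P ν').asModule, y ∈ S' ↔ ∃ x ∈ S, ∀ g : G,
      (((coinducedRep P ν').asModuleEquiv y : coinducedModule P ν') : G → N') g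
        = u ((((coinducedRep P ν).asModuleEquiv x : coinducedModule P ν) : G → N) g)) :
    ∃ Ψ : ((coinducedRep P ν).asModule →ₗ[MonoidAlgebra 𝔽 G] S) ≃+
          ((coinducedRep P ν').asModule →ₗ[MonoidAlgebra 𝔽 G] S'),
      (∀ (f : (coinducedRep P ν).asModule →ₗ[MonoidAlgebra 𝔽 G] S)
          (m : (coinducedRep P ν).asModule) (m' : (coinducedRep P ν').asModule),
        (∀ g : G, (((coinducedRep P ν').asModuleEquiv m' : coinducedModule P ν') : G → N') g
            = u ((((coinducedRep P ν).asModuleEquiv m : coinducedModule P ν) : G → N) g)) →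
        ∀ g : G,
          (((coinducedRep P ν').asModuleEquiv ((Ψ f m' : S') : (coinducedRep P ν').asModule) :
              coinducedModule P ν') : G → N') g
            = u ((((coinducedRep P ν).asModuleEquiv ((f m : S) : (coinducedRep P ν).asModule) :
              coinducedModule P ν) : G → N) g))
      ∧ (∀ (α : 𝔽) (f fα : (coinducedRep P ν).asModule →ₗ[MonoidAlgebra 𝔽 G] S),
          (∀ m, ((fα m : S) : (coinducedRep P ν).asModule)
              = algebraMap 𝔽 (MonoidAlgebra 𝔽 G) α • ((f m : S) : (coinducedRep P ν).asModule)) →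
          ∀ m', ((Ψ fα m' : S') : (coinducedRep P ν').asModule)
              = algebraMap 𝔽 (MonoidAlgebra 𝔽 G) (σ α) •
                  ((Ψ f m' : S') : (coinducedRep P ν').asModule))
      ∧ (∀ (B : Module.End (MonoidAlgebra 𝔽 G) (coinducedRep P ν).asModule)
          (B' : Module.End (MonoidAlgebra 𝔽 G) (coinducedRep P ν').asModule),
          (∀ (m : (coinducedRep P ν).asModule) (m' : (coinducedRep P ν').asModule),
            (∀ g : G, (((coinducedRep P ν').asModuleEquiv m' : coinducedModule P ν') : G → N') g
                = u ((((coinducedRep P ν).asModuleEquiv m : coinducedModule P ν) : G → N) g)) →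
            ∀ g : G,
              (((coinducedRep P ν').asModuleEquiv (B' m') : coinducedModule P ν') : G → N') g
                = u ((((coinducedRep P ν).asModuleEquiv (B m) : coinducedModule P ν) : G → N) g)) →
          ∀ f : (coinducedRep P ν).asModule →ₗ[MonoidAlgebra 𝔽 G] S,
            Ψ (f ∘ₗ B) = (Ψ f) ∘ₗ B') := by
  
  classical
  let U := Umap P ν ν' u hν'
  have hUcval : ∀ m g, cval P ν' (U m) g = u (cval P ν m g) := cval_Umap P ν ν' u hν'
  have hUsmul : ∀ (a : MonoidAlgebra 𝔽 G) m,
      U (a • m) = twistAlg σ a • U m := Umap_smul P ν σ ν' u hu hν'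
  have hUsmul' : ∀ (a : MonoidAlgebra 𝔽 G) m',
      U.symm (a • m') = twistAlg σ.symm a • U.symm m' :=
    Umap_symm_smul P ν σ ν' u hu hν'
  have hιι : ∀ a : MonoidAlgebra 𝔽 G,
      twistAlg σ (twistAlg σ.symm a) = a := twistAlg_twistAlg σ
  have hιι' : ∀ a : MonoidAlgebra 𝔽 G,
      twistAlg σ.symm (twistAlg σ a) = a := twistAlg_twistAlg' σ
  have halgmap : ∀ β : 𝔽,
      algebraMap 𝔽 (MonoidAlgebra 𝔽 G) β = MonoidAlgebra.single (1 : G) β := by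
    intro β
    have := congrFun (MonoidAlgebra.coe_algebraMap (R := 𝔽) (A := 𝔽) (M := G)) β
    simpa using this
  have halg : ∀ β : 𝔽, twistAlg σ (algebraMap 𝔽 (MonoidAlgebra 𝔽 G) β)
      = algebraMap 𝔽 (MonoidAlgebra 𝔽 G) (σ β) := by
    intro β
    rw [halgmap, halgmap, twistAlg_single]
  have hUS : ∀ x ∈ S, U x ∈ S' := fun x hx =>
    (hS' (U x)).mpr ⟨x, hx, fun g => hUcval x g⟩
  have hUS' : ∀ y ∈ S', U.symm y ∈ S := by
    intro y hy
    obtain ⟨x, hx, hc⟩ := (hS' y).mp hy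
    have hyx : y = U x := by
      apply cval_inj P ν'
      intro g
      rw [hUcval]
      exact hc g
    rw [hyx, AddEquiv.symm_apply_apply]
    exact hx
  let Ut : S ≃+ S' :=
    { toFun := fun s => ⟨U s, hUS s s.2⟩
      invFun := fun t => ⟨U.symm t, hUS' t t.2⟩
      left_inv := fun s => Subtype.ext (U.symm_apply_apply s)
      right_inv := fun t => Subtype.ext (U.apply_symm_apply t)
      map_add' := fun s t => Subtype.ext (U.map_add s t) }
  let ΨF : ((coinducedRep P ν).asModule →ₗ[MonoidAlgebra 𝔽 G] S) →
      ((coinducedRep P ν').asModule →ₗ[MonoidAlgebra 𝔽 G] S') := fun f =>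
    { toFun := fun m' => Ut (f (U.symm m'))
      map_add' := fun m₁ m₂ => by
        show Ut (f (U.symm (m₁ + m₂))) = Ut (f (U.symm m₁)) + Ut (f (U.symm m₂))
        rw [map_add, map_add, map_add]
      map_smul' := fun a m' => by
        apply Subtype.ext
        show U ((f (U.symm (a • m')) : S) : (coinducedRep P ν).asModule)
          = ((a • Ut (f (U.symm m')) : S') : (coinducedRep P ν').asModule)
        rw [hUsmul', map_smul f, Submodule.coe_smul, hUsmul, hιι]
        rfl }
  let ΨG : ((coinducedRep P ν').asModule →ₗ[MonoidAlgebra 𝔽 G] S') →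
      ((coinducedRep P ν).asModule →ₗ[MonoidAlgebra 𝔽 G] S) := fun f' =>
    { toFun := fun m => Ut.symm (f' (U m))
      map_add' := fun m₁ m₂ => by
        show Ut.symm (f' (U (m₁ + m₂))) = Ut.symm (f' (U m₁)) + Ut.symm (f' (U m₂))
        rw [map_add, map_add, map_add]
      map_smul' := fun a m => by
        apply Subtype.ext
        show U.symm ((f' (U (a • m)) : S') : (coinducedRep P ν').asModule)
          = ((a • Ut.symm (f' (U m)) : S) : (coinducedRep P ν).asModule)
        rw [hUsmul, map_smul f', Submodule.coe_smul, hUsmul', hιι']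
        rfl }
  let Ψ : ((coinducedRep P ν).asModule →ₗ[MonoidAlgebra 𝔽 G] S) ≃+
      ((coinducedRep P ν').asModule →ₗ[MonoidAlgebra 𝔽 G] S') :=
    { toFun := ΨF
      invFun := ΨG
      left_inv := fun f => LinearMap.ext fun m => Subtype.ext (by
        show U.symm (U ((f (U.symm (U m)) : S) : (coinducedRep P ν).asModule))
          = ((f m : S) : (coinducedRep P ν).asModule)
        rw [U.symm_apply_apply, U.symm_apply_apply])
      right_inv := fun f' => LinearMap.ext fun m' => Subtype.ext (by
        show U (U.symm ((f' (U (U.symm m')) : S') : (coinducedRep P ν').asModule))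
          = ((f' m' : S') : (coinducedRep P ν').asModule)
        rw [U.apply_symm_apply, U.apply_symm_apply])
      map_add' := fun f g => LinearMap.ext fun m' => Subtype.ext (by
        show U (((f + g) (U.symm m') : S) : (coinducedRep P ν).asModule) = _
        rw [LinearMap.add_apply, Submodule.coe_add, map_add]
        rfl) }
  refine ⟨Ψ, ?_, ?_, ?_⟩
  · intro f m m' hc g
    have hm : U.symm m' = m := by
      apply U.injective
      rw [U.apply_symm_apply]
      apply cval_inj P ν'
      intro g'
      rw [hUcval]
      exact hc g'
    show cval P ν' ((Ψ f m' : S') : (coinducedRep P ν').asModule) g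
      = u (cval P ν ((f m : S) : (coinducedRep P ν).asModule) g)
    have h2 : ((Ψ f m' : S') : (coinducedRep P ν').asModule)
        = U ((f m : S) : (coinducedRep P ν).asModule) := by
      show U ((f (U.symm m') : S) : (coinducedRep P ν).asModule) = _
      rw [hm]
    rw [h2, hUcval]
  · intro α f fα hfα m'
    show U ((fα (U.symm m') : S) : (coinducedRep P ν).asModule)
      = algebraMap 𝔽 (MonoidAlgebra 𝔽 G) (σ α) •
          U ((f (U.symm m') : S) : (coinducedRep P ν).asModule)
    rw [hfα, hUsmul, halg]
  · intro B B' hBB' f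
    apply LinearMap.ext
    intro m'
    apply Subtype.ext
    show U ((f (B (U.symm m')) : S) : (coinducedRep P ν).asModule)
      = U ((f (U.symm (B' m')) : S) : (coinducedRep P ν).asModule)
    have hkey : B' m' = U (B (U.symm m')) := by
      apply cval_inj P ν'
      intro g
      rw [hUcval]
      refine hBB' (U.symm m') m' (fun g' => ?_) g
      conv_lhs => rw [← U.apply_symm_apply m']
      exact hUcval _ g'
    rw [hkey, U.symm_apply_apply]
end

section
/- Let n be a positive integer, K = ℚ(ζ_n) the n-th cyclotomic field, and σ ∈ Gal(K/ℚ) an automorphism that fixes every root of unity of 2-power order in K and squares every root of unity of odd order in K. Let m be an odd positive integer and suppose x ∈ K satisfies x² = m. Then σ(x) = x if m ≡ ±1 (mod 8), and σ(x) = −x if m ≡ ±3 (mod 8). -/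
open Polynomial AddChar

lemma my_gauss_step {L : Type*} [Field L] [CharZero L] (τ : L ≃ₐ[ℚ] L)
    {p : ℕ} (hp : p.Prime) (hp2 : p ≠ 2) {ζ : L} (hζ : IsPrimitiveRoot ζ p)
    (hτ : ∀ z : L, z ^ p = 1 → τ z = z ^ 2) :
    ∃ g : L, g ^ 2 = (ZMod.χ₄ p : L) * p ∧ τ g = (ZMod.χ₈ p : L) * g := by
  haveI : Fact p.Prime := ⟨hp⟩
  haveI : NeZero p := ⟨hp.ne_zero⟩
  have hchar : ringChar (ZMod p) ≠ 2 := by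
    rw [ZMod.ringChar_zmod_n]; exact hp2
  set χ : MulChar (ZMod p) L := (quadraticChar (ZMod p)).ringHomComp (Int.castRingHom L) with hχdef
  have hζp : ζ ^ p = 1 := hζ.pow_eq_one
  set ψ : AddChar (ZMod p) L := AddChar.zmodChar p hζp with hψdef
  have hχ₁ : χ ≠ 1 :=
    (MulChar.ringHomComp_ne_one_iff (Int.cast_injective)).mpr (quadraticChar_ne_one hchar)
  have hχ₂ : χ.IsQuadratic := (quadraticChar_isQuadratic (ZMod p)).comp _
  have hψprim : ψ.IsPrimitive := AddChar.zmodChar_primitive_of_primitive_root p hζ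
  refine ⟨gaussSum χ ψ, ?_, ?_⟩
  · rw [gaussSum_sq hχ₁ hχ₂ hψprim]
    congr 1
    · rw [hχdef, MulChar.ringHomComp_apply, quadraticChar_neg_one hchar, ZMod.card]
      simp
    · rw [ZMod.card]
  · -- the action of τ
    have key : τ (gaussSum χ ψ) = gaussSum χ (ψ.mulShift 2) := by
      rw [gaussSum, map_sum, gaussSum]
      refine Finset.sum_congr rfl fun t _ => ?_
      rw [map_mul]
      congr 1
      · rw [hχdef, MulChar.ringHomComp_apply]
        exact map_intCast _ _
      · have h1 : (ψ t) ^ p = 1 := by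
          rw [hψdef, AddChar.zmodChar_apply, ← pow_mul, mul_comm, pow_mul, hζp, one_pow]
        rw [hτ _ h1, AddChar.mulShift_apply, two_mul, map_add_eq_mul, sq]
    have hu : IsUnit (2 : ZMod p) := by
      apply isUnit_iff_ne_zero.mpr
      have : ((2 : ℕ) : ZMod p) ≠ 0 := by
        rw [Ne, ZMod.natCast_eq_zero_iff]
        exact fun h => hp2 ((Nat.prime_dvd_prime_iff_eq hp Nat.prime_two).mp h)
      exact_mod_cast this
    have hmul := gaussSum_mulShift χ ψ hu.unit
    rw [hu.unit_spec] at hmul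
    have hχ2 : χ 2 = ((ZMod.χ₈ p : ℤ) : L) := by
      rw [hχdef, MulChar.ringHomComp_apply, quadraticChar_two hchar, ZMod.card]
      simp
    have hε : (ZMod.χ₈ p : ℤ) = 1 ∨ (ZMod.χ₈ p : ℤ) = -1 := by
      have := ZMod.χ₈_nat_eq_if_mod_eight p
      rw [Nat.odd_iff.mp (hp.odd_of_ne_two hp2)] at this
      rcases em (p % 8 = 1 ∨ p % 8 = 7) with h | h <;> simp [h] at this <;> simp [this]
    rw [hχ2] at hmul
    rw [key]
    rcases hε with hε | hε <;> rw [hε] at hmul ⊢ <;> push_cast at hmul ⊢ <;> first | linear_combination hmul | linear_combination -hmul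

lemma my_sqrt_tau {L : Type*} [Field L] [CharZero L] (τ : L ≃ₐ[ℚ] L) {i : L} (hi : i ^ 2 = -1)
    (hτi : τ i = i) (N : ℕ)
    (hτodd : ∀ b : ℕ, Odd b → b ∣ N → ∀ z : L, z ^ b = 1 → τ z = z ^ 2)
    (hroot : ∀ p : ℕ, p.Prime → p ∣ N → ∃ ζ : L, IsPrimitiveRoot ζ p) :
    ∀ s : ℕ, Squarefree s → Odd s → s ∣ N →
      ∃ H : L, H ^ 2 = (s : L) ∧ τ H = (ZMod.χ₈ s : L) * H := by
  intro s
  induction s using Nat.strong_induction_on with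
  | _ s IH =>
  intro hsf hodd hdvd
  rcases eq_or_ne s 1 with rfl | hs1
  · exact ⟨1, by simp, by norm_num⟩
  · have hs0 : s ≠ 0 := hsf.ne_zero
    set p := s.minFac with hpdef
    have hp : p.Prime := Nat.minFac_prime hs1
    have hps : p ∣ s := Nat.minFac_dvd s
    have hp2 : p ≠ 2 := by
      intro h
      rw [Nat.odd_iff] at hodd
      have : (2 : ℕ) ∣ s := h ▸ hps
      omega
    obtain ⟨s', hss'⟩ := hps
    have hps : p ∣ s := ⟨s', hss'⟩
    have hs'pos : s' ≠ 0 := by rintro rfl; simp [hss'] at hs0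
    have hs'lt : s' < s := by
      rw [hss']
      exact lt_mul_of_one_lt_left (Nat.pos_of_ne_zero hs'pos) hp.one_lt
    have hsf' : Squarefree s' := hsf.squarefree_of_dvd ⟨p, by rw [hss']; ring⟩
    have hodd' : Odd s' := (Nat.odd_mul.mp (hss' ▸ hodd)).2
    have hdvd' : s' ∣ N := dvd_trans ⟨p, by rw [hss']; ring⟩ hdvd
    obtain ⟨H', hH'1, hH'2⟩ := IH s' hs'lt hsf' hodd' hdvd'
    obtain ⟨ζ, hζ⟩ := hroot p hp (dvd_trans hps hdvd)
    obtain ⟨g, hg1, hg2⟩ := my_gauss_step τ hp hp2 hζ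
      (fun z hz => hτodd p (hp.odd_of_ne_two hp2) (dvd_trans hps hdvd) z hz)
    have hχ₈s : (ZMod.χ₈ s : ℤ) = ZMod.χ₈ p * ZMod.χ₈ s' := by
      rw [hss', Nat.cast_mul, map_mul]
    have hχ₄ : (ZMod.χ₄ p : ℤ) = 1 ∨ (ZMod.χ₄ p : ℤ) = -1 := by
      have := ZMod.χ₄_nat_eq_if_mod_four p
      have hpodd : p % 2 = 1 := Nat.odd_iff.mp (hp.odd_of_ne_two hp2)
      rcases em (p % 4 = 1) with h | h <;> simp [h, hpodd] at this <;> simp [this]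
    rcases hχ₄ with h4 | h4
    · refine ⟨g * H', ?_, ?_⟩
      · rw [mul_pow, hg1, hH'1, h4, hss']
        push_cast
        ring
      · rw [map_mul, hg2, hH'2, hχ₈s]
        push_cast
        ring
    · refine ⟨g * H' * i, ?_, ?_⟩
      · rw [mul_pow, mul_pow, hg1, hH'1, hi, h4, hss']
        push_cast
        ring
      · rw [map_mul, map_mul, hg2, hH'2, hτi, hχ₈s]
        push_cast
        ring

/-- Let `K = ℚ(ζ_n)` and let `σ ∈ Gal(K/ℚ)` fix every root of unity of `2`-power order and
square every root of unity of odd order.  If `m` is an odd positive integer and `x ∈ K`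
satisfies `x² = m`, then `σ x = x` when `m ≡ ±1 (mod 8)` and `σ x = -x` when
`m ≡ ±3 (mod 8)`. -/
theorem galois_action_on_odd_square_roots
    (n : ℕ+) (σ : CyclotomicField n ℚ ≃ₐ[ℚ] CyclotomicField n ℚ)
    (hσ2 : ∀ z : CyclotomicField n ℚ, (∃ k : ℕ, z ^ (2 ^ k) = 1) → σ z = z)
    (hσodd : ∀ z : CyclotomicField n ℚ, (∃ k : ℕ, Odd k ∧ z ^ k = 1) → σ z = z ^ 2)
    (m : ℕ) (hm : Odd m) (hmpos : 0 < m)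
    (x : CyclotomicField n ℚ) (hx : x ^ 2 = (m : CyclotomicField n ℚ)) :
    ((m % 8 = 1 ∨ m % 8 = 7) → σ x = x) ∧
    ((m % 8 = 3 ∨ m % 8 = 5) → σ x = -x) := by
  classical
  obtain ⟨s, k, hks, hsf⟩ := Nat.sq_mul_squarefree m
  have hkodd : Odd k := by
    rcases Nat.even_or_odd k with h | h
    · exfalso
      have : Even m := by
        rw [← hks, pow_two, mul_assoc]
        exact h.mul_right _
      exact (Nat.not_even_iff_odd.mpr hm) this
    · exact h
  have hsodd : Odd s := by
    rcases Nat.even_or_odd s with h | h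
    · exfalso
      have : Even m := by rw [← hks]; exact h.mul_left _
      exact (Nat.not_even_iff_odd.mpr hm) this
    · exact h
  have hkpos : 0 < k := hkodd.pos
  have hspos : 0 < s := hsodd.pos
  set N : ℕ+ := 4 * ⟨m, hmpos⟩ * n with hNdef
  have hN0 : (N : ℕ) ≠ 0 := N.pos.ne'
  haveI : NeZero (N : ℕ) := ⟨hN0⟩
  have hNval : (N : ℕ) = 4 * m * (n : ℕ) := rfl
  have h4N : 4 ∣ (N : ℕ) := ⟨m * n, by rw [hNval]; ring⟩
  have hmN : m ∣ (N : ℕ) := ⟨4 * n, by rw [hNval]; ring⟩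
  have hnN : (n : ℕ) ∣ (N : ℕ) := ⟨4 * m, by rw [hNval]; ring⟩
  set A := ordProj[2] (N : ℕ) with hAdef
  set B := ordCompl[2] (N : ℕ) with hBdef
  have hAB : A * B = (N : ℕ) := Nat.ordProj_mul_ordCompl_eq_self _ 2
  have hAdvd : A ∣ (N : ℕ) := ⟨B, hAB.symm⟩
  have hBdvd : B ∣ (N : ℕ) := ⟨A, by rw [← hAB]; ring⟩
  have hA4 : 4 ∣ A := by
    have h22 : (2 : ℕ) ^ 2 ∣ (N : ℕ) := by norm_num [h4N]
    have hle : 2 ≤ (N : ℕ).factorization 2 :=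
      (Nat.Prime.pow_dvd_iff_le_factorization Nat.prime_two hN0).mp h22
    calc (4 : ℕ) = 2 ^ 2 := by norm_num
      _ ∣ 2 ^ ((N : ℕ).factorization 2) := pow_dvd_pow 2 hle
  have hA1 : 1 < A := lt_of_lt_of_le (by norm_num) (Nat.le_of_dvd (Nat.ordProj_pos _ 2) hA4)
  have hBodd : Odd B := Nat.odd_iff.mpr
    (Nat.two_dvd_ne_zero.mp (Nat.not_dvd_ordCompl Nat.prime_two hN0))
  have hcopAB : Nat.Coprime A B :=
    Nat.Coprime.pow_left _ (Nat.coprime_ordCompl Nat.prime_two hN0)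
  obtain ⟨d, hd1, hd2⟩ := Nat.chineseRemainder hcopAB 1 2
  have hcopdN : Nat.Coprime d (N : ℕ) := by
    rw [← hAB]
    refine Nat.Coprime.mul_right ?_ ?_
    · obtain ⟨t, ht⟩ := hd1.dvd
      rw [← Nat.isCoprime_iff_coprime]
      exact ⟨1, t, by linear_combination -ht⟩
    · obtain ⟨t, ht⟩ := hd2.dvd
      have hc2B : IsCoprime (2 : ℤ) (B : ℤ) := by
        rw [show ((2 : ℤ)) = ((2 : ℕ) : ℤ) by norm_num, Nat.isCoprime_iff_coprime]
        exact Nat.prime_two.coprime_iff_not_dvd.mpr (Nat.not_dvd_ordCompl Nat.prime_two hN0)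
      obtain ⟨u, v, huv⟩ := hc2B
      rw [← Nat.isCoprime_iff_coprime]
      exact ⟨u, v + u * t, by linear_combination huv - u * ht⟩
  set c : (ZMod (N : ℕ))ˣ := ZMod.unitOfCoprime d hcopdN with hcdef
  set cv : ℕ := ((c : ZMod (N : ℕ))).val with hcvdef
  have hcv : cv = d % (N : ℕ) := by
    rw [hcvdef, hcdef, ZMod.coe_unitOfCoprime, ZMod.val_natCast]
  have hcvA : cv ≡ 1 [MOD A] := by
    rw [hcv]
    exact ((Nat.mod_modEq d (N : ℕ)).of_dvd hAdvd).trans hd1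
  have hcvB : cv ≡ 2 [MOD B] := by
    rw [hcv]
    exact ((Nat.mod_modEq d (N : ℕ)).of_dvd hBdvd).trans hd2
  have hirr : Irreducible (Polynomial.cyclotomic (N : ℕ) ℚ) :=
    Polynomial.cyclotomic.irreducible_rat N.pos
  haveI : IsCyclotomicExtension {(N : ℕ)} ℚ (CyclotomicField N ℚ) := CyclotomicField.isCyclotomicExtension _ _
  set ζ := IsCyclotomicExtension.zeta N ℚ (CyclotomicField N ℚ) with hζdef
  have hζ : IsPrimitiveRoot ζ (N : ℕ) := IsCyclotomicExtension.zeta_spec N ℚ (CyclotomicField N ℚ)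
  set τ : (CyclotomicField N ℚ) ≃ₐ[ℚ] (CyclotomicField N ℚ) := (IsCyclotomicExtension.autEquivPow (CyclotomicField N ℚ) hirr).symm c with hτdef
  have hτζ : τ ζ = ζ ^ cv := by
    have h2 : (hζ.autToPow ℚ) τ = c := by
      have h3 := (IsCyclotomicExtension.autEquivPow (CyclotomicField N ℚ) hirr).apply_symm_apply c
      exact h3
    rw [← hζ.autToPow_spec ℚ τ, h2]
  have hτpow : ∀ z : (CyclotomicField N ℚ), z ^ (N : ℕ) = 1 → τ z = z ^ cv := by
    intro z hz
    obtain ⟨j, hjlt, hjz⟩ := hζ.eq_pow_of_pow_eq_one hz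
    rw [← hjz]
    calc τ (ζ ^ j) = (τ ζ) ^ j := map_pow τ ζ j
      _ = (ζ ^ j) ^ cv := by rw [hτζ, ← pow_mul, ← pow_mul, mul_comm]
  have hτA : ∀ z : (CyclotomicField N ℚ), z ^ A = 1 → τ z = z := by
    intro z hz
    have hzN : z ^ (N : ℕ) = 1 := by
      obtain ⟨q, hq⟩ := hAdvd
      exact orderOf_dvd_iff_pow_eq_one.mp ((orderOf_dvd_iff_pow_eq_one.mpr hz).trans ⟨q, hq⟩)
    have hmodA : cv % A = 1 := by
      have h := hcvA
      rwa [Nat.ModEq, Nat.mod_eq_of_lt hA1] at h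
    rw [hτpow z hzN, pow_eq_pow_mod cv hz, hmodA, pow_one]
  have hτodd : ∀ b : ℕ, Odd b → b ∣ (N : ℕ) → ∀ z : (CyclotomicField N ℚ), z ^ b = 1 → τ z = z ^ 2 := by
    intro b hbodd hbN z hzb
    have hzN : z ^ (N : ℕ) = 1 := by
      obtain ⟨q, hq⟩ := hbN
      exact orderOf_dvd_iff_pow_eq_one.mp ((orderOf_dvd_iff_pow_eq_one.mpr hzb).trans ⟨q, hq⟩)
    have hbB : b ∣ B := by
      have h2b : ¬ (2 ∣ b) := by
        rw [Nat.odd_iff] at hbodd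
        omega
      have hcob : Nat.Coprime b A :=
        Nat.Coprime.pow_right _ ((Nat.prime_two.coprime_iff_not_dvd.mpr h2b).symm)
      exact hcob.dvd_of_dvd_mul_left (hAB ▸ hbN)
    rw [hτpow z hzN, pow_eq_pow_mod cv hzb, hcvB.of_dvd hbB, ← pow_eq_pow_mod 2 hzb]
  -- embedding of (CyclotomicField n ℚ) into (CyclotomicField N ℚ)
  haveI : IsCyclotomicExtension {(n : ℕ)} ℚ (CyclotomicField n ℚ) := CyclotomicField.isCyclotomicExtension _ _
  haveI hKsplit : Polynomial.IsSplittingField ℚ (CyclotomicField n ℚ) (Polynomial.X ^ ((n : ℕ)) - 1) :=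
    IsCyclotomicExtension.isSplittingField_X_pow_sub_one n ℚ (CyclotomicField n ℚ)
  have hζn : IsPrimitiveRoot (ζ ^ ((N : ℕ) / (n : ℕ))) (n : ℕ) :=
    hζ.pow N.pos (Nat.div_mul_cancel hnN).symm
  have hsplit : Polynomial.Splits ((Polynomial.X ^ ((n : ℕ)) - 1 : Polynomial ℚ).map (algebraMap ℚ (CyclotomicField N ℚ))) := by
    rw [Polynomial.map_sub, Polynomial.map_one,
      Polynomial.map_pow, Polynomial.map_X, ← Polynomial.C_1]
    exact Polynomial.X_pow_sub_one_splits hζn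
  set ι : (CyclotomicField n ℚ) →ₐ[ℚ] (CyclotomicField N ℚ) := Polynomial.IsSplittingField.lift (CyclotomicField n ℚ) (Polynomial.X ^ ((n : ℕ)) - 1) hsplit
    with hιdef
  have hιinj : Function.Injective ι := ι.toRingHom.injective
  -- sigma acts as the cv-th power on n-th roots of unity
  have hgen : ∀ z : (CyclotomicField n ℚ), z ^ (n : ℕ) = 1 → σ z = z ^ cv := by
    intro z hzn
    have hz0 : z ≠ 0 := by
      intro h
      rw [h, zero_pow n.pos.ne'] at hzn
      exact zero_ne_one hzn
    have hn0 : (n : ℕ) ≠ 0 := n.pos.ne'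
    set a' := ordProj[2] ((n : ℕ)) with ha'def
    set b' := ordCompl[2] ((n : ℕ)) with hb'def
    have hab' : a' * b' = (n : ℕ) := Nat.ordProj_mul_ordCompl_eq_self _ 2
    have hb'odd : Odd b' := Nat.odd_iff.mpr
      (Nat.two_dvd_ne_zero.mp (Nat.not_dvd_ordCompl Nat.prime_two hn0))
    have ha'A : a' ∣ A := Nat.ordProj_dvd_ordProj_of_dvd hN0 hnN 2
    have hb'B : b' ∣ B := Nat.ordCompl_dvd_ordCompl_of_dvd hnN 2
    have hcop' : Nat.Coprime a' b' :=
      Nat.Coprime.pow_left _ (Nat.coprime_ordCompl Nat.prime_two hn0)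
    obtain ⟨u, v, huv⟩ := Nat.isCoprime_iff_coprime.mpr hcop'
    have hw1 : σ (z ^ b') = z ^ b' := by
      refine hσ2 _ ⟨(n : ℕ).factorization 2, ?_⟩
      rw [← pow_mul, mul_comm b', ← ha'def, hab']
      exact hzn
    have hw2 : σ (z ^ a') = (z ^ a') ^ 2 :=
      hσodd _ ⟨b', hb'odd, by rw [← pow_mul, hab']; exact hzn⟩
    have hdecomp : z = (z ^ a') ^ u * (z ^ b') ^ v := by
      rw [← zpow_natCast z a', ← zpow_natCast z b', ← zpow_mul, ← zpow_mul, ← zpow_add₀ hz0]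
      rw [show (a' : ℤ) * u + (b' : ℤ) * v = 1 by linarith [huv]]
      exact (zpow_one z).symm
    have key : σ z = z ^ (2 * (u * (a' : ℤ)) + v * (b' : ℤ)) := by
      have e1 : σ z = ((z ^ a') ^ 2) ^ u * (z ^ b') ^ v := by
        conv_lhs => rw [hdecomp]
        rw [map_mul, map_zpow₀, map_zpow₀, hw1, hw2]
      rw [e1]
      have e2 : ((z ^ a') ^ 2) ^ u = z ^ (2 * (u * (a' : ℤ))) := by
        rw [← pow_mul, ← zpow_natCast z (a' * 2), ← zpow_mul]
        congr 1
        push_cast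
        ring
      have e3 : (z ^ b') ^ v = z ^ (v * (b' : ℤ)) := by
        rw [← zpow_natCast z b', ← zpow_mul]
        congr 1
        ring
      rw [e2, e3, ← zpow_add₀ hz0]
    have hcvA' : cv ≡ 1 [MOD a'] := hcvA.of_dvd ha'A
    have hcvB' : cv ≡ 2 [MOD b'] := hcvB.of_dvd hb'B
    have hdA : (a' : ℤ) ∣ (2 * (u * (a' : ℤ)) + v * (b' : ℤ)) - cv := by
      obtain ⟨t, ht⟩ := hcvA'.dvd
      exact ⟨u + t, by linear_combination huv + ht⟩
    have hdB : (b' : ℤ) ∣ (2 * (u * (a' : ℤ)) + v * (b' : ℤ)) - cv := by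
      obtain ⟨t, ht⟩ := hcvB'.dvd
      exact ⟨t - v, by linear_combination 2 * huv + ht⟩
    have hndvd : ((n : ℕ) : ℤ) ∣ (2 * (u * (a' : ℤ)) + v * (b' : ℤ)) - cv := by
      have h := (Nat.isCoprime_iff_coprime.mpr hcop').mul_dvd hdA hdB
      rwa [← Nat.cast_mul, hab'] at h
    obtain ⟨t, ht⟩ := hndvd
    rw [key]
    have hzz : z ^ (2 * (u * (a' : ℤ)) + v * (b' : ℤ)) = z ^ (cv : ℤ) := by
      rw [show (2 * (u * (a' : ℤ)) + v * (b' : ℤ)) = (cv : ℤ) + ((n : ℕ) : ℤ) * t by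
        linarith [ht]]
      rw [zpow_add₀ hz0, zpow_mul]
      have hone : z ^ (((n : ℕ) : ℤ)) = 1 := by rw [zpow_natCast]; exact hzn
      rw [hone, one_zpow, mul_one]
    rw [hzz, zpow_natCast]
  -- compatibility of τ and σ through ι
  have hcomm : ∀ w : (CyclotomicField n ℚ), τ (ι w) = ι (σ w) := by
    intro w
    have hmem : w ∈ Algebra.adjoin ℚ {b : (CyclotomicField n ℚ) | ∃ a : ℕ, a ∈ ({(n : ℕ)} : Set ℕ) ∧ a ≠ 0 ∧ b ^ (a : ℕ) = 1} :=
      IsCyclotomicExtension.adjoin_roots w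
    have hle : Algebra.adjoin ℚ {b : (CyclotomicField n ℚ) | ∃ a : ℕ, a ∈ ({(n : ℕ)} : Set ℕ) ∧ a ≠ 0 ∧ b ^ (a : ℕ) = 1} ≤
        AlgHom.equalizer ((τ : (CyclotomicField N ℚ) →ₐ[ℚ] (CyclotomicField N ℚ)).comp ι) (ι.comp (σ : (CyclotomicField n ℚ) →ₐ[ℚ] (CyclotomicField n ℚ))) := by
      refine Algebra.adjoin_le ?_
      rintro z ⟨a, ha, -, hza⟩
      rw [Set.mem_singleton_iff] at ha
      subst ha
      have h1 : σ z = z ^ cv := hgen z hza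
      have h2 : (ι z) ^ (n : ℕ) = 1 := by rw [← map_pow, hza, map_one]
      have h3 : (ι z) ^ (N : ℕ) = 1 := by
        obtain ⟨q, hq⟩ := hnN
        exact orderOf_dvd_iff_pow_eq_one.mp ((orderOf_dvd_iff_pow_eq_one.mpr h2).trans ⟨q, hq⟩)
      have h4 : τ (ι z) = ι (σ z) := by
        rw [hτpow _ h3, h1, map_pow]
      exact (AlgHom.mem_equalizer _ _ z).mpr (by simpa using h4)
    have := hle hmem
    simpa using (AlgHom.mem_equalizer _ _ w).mp this
  -- the square root machine
  have hroot : ∀ p : ℕ, p.Prime → p ∣ (N : ℕ) → ∃ ζp : (CyclotomicField N ℚ), IsPrimitiveRoot ζp p := by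
    intro p hp hpN
    exact ⟨ζ ^ ((N : ℕ) / p), hζ.pow N.pos (Nat.div_mul_cancel hpN).symm⟩
  have hi4 : IsPrimitiveRoot (ζ ^ ((N : ℕ) / 4)) 4 :=
    hζ.pow N.pos (Nat.div_mul_cancel h4N).symm
  set i : (CyclotomicField N ℚ) := ζ ^ ((N : ℕ) / 4) with hidef
  have hi : i ^ 2 = -1 := by
    have h2 : IsPrimitiveRoot (i ^ 2) 2 := hi4.pow (by norm_num) (by norm_num)
    exact h2.eq_neg_one_of_two_right
  have hτi : τ i = i := by
    refine hτA i ?_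
    obtain ⟨q, hq⟩ := hA4
    rw [hq, pow_mul, hi4.pow_eq_one, one_pow]
  have hsm : s ∣ m := ⟨k ^ 2, by rw [← hks]; ring⟩
  have hsN : s ∣ (N : ℕ) := dvd_trans hsm hmN
  obtain ⟨H, hH1, hH2⟩ := my_sqrt_tau τ hi hτi (N : ℕ) hτodd hroot s hsf hsodd hsN
  -- conclude
  have hxL : (ι x) ^ 2 = ((k : (CyclotomicField N ℚ)) * H) ^ 2 := by
    rw [mul_pow, hH1, ← map_pow, hx, map_natCast]
    push_cast [← hks]
    ring
  have hcases : ι x = (k : (CyclotomicField N ℚ)) * H ∨ ι x = -((k : (CyclotomicField N ℚ)) * H) := by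
    have h0 : (ι x - (k : (CyclotomicField N ℚ)) * H) * (ι x + (k : (CyclotomicField N ℚ)) * H) = 0 := by linear_combination hxL
    rcases mul_eq_zero.mp h0 with h | h
    · left; linear_combination h
    · right; linear_combination h
  have hτx : τ (ι x) = ((ZMod.χ₈ s : ℤ) : (CyclotomicField N ℚ)) * ι x := by
    rcases hcases with h | h
    · rw [h, map_mul, map_natCast, hH2]
      ring
    · rw [h, map_neg, map_mul, map_natCast, hH2]
      ring
  have hsx : ι (σ x) = ι (((ZMod.χ₈ s : ℤ) : (CyclotomicField n ℚ)) * x) := by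
    rw [← hcomm x, hτx, map_mul, map_intCast]
  have hfin : σ x = ((ZMod.χ₈ s : ℤ) : (CyclotomicField n ℚ)) * x := hιinj hsx
  have hχm : (ZMod.χ₈ s : ℤ) = (ZMod.χ₈ m : ℤ) := by
    have hmul : (ZMod.χ₈ m : ℤ) = ZMod.χ₈ (k : ZMod 8) * ZMod.χ₈ (k : ZMod 8) *
        ZMod.χ₈ (s : ZMod 8) := by
      rw [← hks]
      push_cast
      rw [map_mul, map_pow, sq]
    have hk8 : (ZMod.χ₈ (k : ZMod 8) : ℤ) = 1 ∨ (ZMod.χ₈ (k : ZMod 8) : ℤ) = -1 := by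
      have h := ZMod.χ₈_nat_eq_if_mod_eight k
      rw [Nat.odd_iff.mp hkodd] at h
      rcases em (k % 8 = 1 ∨ k % 8 = 7) with hc | hc <;> simp [hc] at h <;> simp [h]
    rcases hk8 with h | h <;> rw [hmul, h] <;> ring
  rw [hχm] at hfin
  constructor
  · intro hcase
    have h1 : (ZMod.χ₈ (m : ZMod 8) : ℤ) = 1 := by
      rw [ZMod.χ₈_nat_eq_if_mod_eight, Nat.odd_iff.mp hm]
      simp [hcase]
    rw [hfin, h1]
    push_cast
    ring
  · intro hcase
    have h1 : (ZMod.χ₈ (m : ZMod 8) : ℤ) = -1 := by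
      rw [ZMod.χ₈_nat_eq_if_mod_eight, Nat.odd_iff.mp hm]
      have hne : ¬ (m % 8 = 1 ∨ m % 8 = 7) := by omega
      simp [hne]
    rw [hfin, h1]
    push_cast
    ring
end

section
/- Let q be a power of an odd prime, let ℓ be a nonnegative integer, let K = ℚ(ζ_n) be a cyclotomic field, and let σ ∈ Gal(K/ℚ) be an automorphism that fixes every root of unity of 2-power order in K and squares every root of unity of odd order in K. Suppose x ∈ K satisfies x² = q^ℓ. Then σ(x) = x if q ≡ ±1 (mod 8), and σ(x) = (−1)^ℓ·x if q ≡ ±3 (mod 8). -/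
open Polynomial AddChar MulChar

section GaussAux

variable {F : Type*} [Field F]

lemma my_sq_cases {a b : F} (h : a ^ 2 = b ^ 2) : a = b ∨ a = -b := by
  have h0 : (a - b) * (a + b) = 0 := by ring_nf; linear_combination h
  rcases mul_eq_zero.mp h0 with h' | h'
  · exact Or.inl (sub_eq_zero.mp h')
  · exact Or.inr (add_eq_zero_iff_eq_neg.mp h')

/-- How a ring endomorphism acting on the `p`-th roots of unity by `ζ ↦ ζ^t` acts on the
quadratic Gauss sum. -/
lemma gauss_map {p : ℕ} [Fact p.Prime] {ζ : F} (hζ1 : ζ ^ p = 1)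
    (f : F →+* F) (t : ZMod p) (hf : f ζ = ζ ^ t.val) :
    f (gaussSum ((quadraticChar (ZMod p)).ringHomComp (Int.castRingHom F))
        (AddChar.zmodChar p hζ1)) =
    gaussSum ((quadraticChar (ZMod p)).ringHomComp (Int.castRingHom F))
        (AddChar.mulShift (AddChar.zmodChar p hζ1) t) := by
  classical
  simp only [gaussSum, map_sum, map_mul]
  refine Finset.sum_congr rfl fun a _ => ?_
  congr 1
  · simp only [MulChar.ringHomComp_apply, Int.coe_castRingHom, map_intCast]
  · rw [AddChar.mulShift_apply, AddChar.zmodChar_apply, AddChar.zmodChar_apply, map_pow, hf,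
      ← pow_mul, ZMod.val_mul, ← pow_eq_pow_mod _ hζ1]

end GaussAux

section GaussBasic

variable {F : Type*} [Field F] [CharZero F]

lemma gauss_basic {p : ℕ} [Fact p.Prime] (hpodd : Odd p) {ζ : F} (hζ : IsPrimitiveRoot ζ p) :
    (gaussSum ((quadraticChar (ZMod p)).ringHomComp (Int.castRingHom F))
        (AddChar.zmodChar p hζ.pow_eq_one)) ^ 2 =
      (((quadraticChar (ZMod p) (-1) : ℤ) : F)) * p ∧
    gaussSum ((quadraticChar (ZMod p)).ringHomComp (Int.castRingHom F))
        (AddChar.zmodChar p hζ.pow_eq_one) ≠ 0 ∧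
    ((quadraticChar (ZMod p) (-1) : ℤ) = 1 ∨ (quadraticChar (ZMod p) (-1) : ℤ) = -1) := by
  classical
  have hp : p.Prime := Fact.out
  have hp2 : p ≠ 2 := by
    rcases hpodd with ⟨k, hk⟩; omega
  have hchar2 : ringChar (ZMod p) ≠ 2 := by
    rw [ZMod.ringChar_zmod_n]; exact hp2
  set χ := (quadraticChar (ZMod p)).ringHomComp (Int.castRingHom F) with hχdef
  have hχ1 : χ ≠ 1 :=
    (MulChar.ringHomComp_ne_one_iff (RingHom.injective_int _)).mpr (quadraticChar_ne_one hchar2)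
  have hχq : χ.IsQuadratic := (quadraticChar_isQuadratic (ZMod p)).comp _
  have hψ : (AddChar.zmodChar p hζ.pow_eq_one).IsPrimitive :=
    AddChar.zmodChar_primitive_of_primitive_root p hζ
  have hsq := gaussSum_sq hχ1 hχq hψ
  have hcard : (Fintype.card (ZMod p) : F) = (p : F) := by rw [ZMod.card]
  have hne : ((-1 : ZMod p)) ≠ 0 := by
    simp only [ne_eq, neg_eq_zero, one_ne_zero, not_false_iff]
  have hq1 : (quadraticChar (ZMod p) (-1) : ℤ) = 1 ∨ (quadraticChar (ZMod p) (-1) : ℤ) = -1 := by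
    rcases quadraticChar_isQuadratic (ZMod p) (-1) with h | h | h
    · exact absurd (quadraticChar_eq_zero_iff.mp h) hne
    · exact Or.inl h
    · exact Or.inr h
  have hχm1 : χ (-1) = (((quadraticChar (ZMod p) (-1) : ℤ) : F)) := by
    simp [hχdef, MulChar.ringHomComp_apply]
  have hsq' : (gaussSum χ (AddChar.zmodChar p hζ.pow_eq_one)) ^ 2 =
      (((quadraticChar (ZMod p) (-1) : ℤ) : F)) * p := by
    rw [hsq, hχm1, hcard]
  refine ⟨hsq', ?_, hq1⟩
  intro h0
  rw [h0] at hsq'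
  have hpne : (p : F) ≠ 0 := Nat.cast_ne_zero.mpr hp.pos.ne'
  rcases hq1 with h | h <;> rw [h] at hsq' <;> simp [hpne] at hsq' <;> exact hpne hsq'.symm

end GaussBasic

section LemA

lemma lemA {K : Type*} [Field K] [CharZero K] (p : ℕ) [Fact p.Prime] (hpodd : Odd p)
    (σ : K →+* K) (hσ2 : ∀ z : K, (∃ k : ℕ, z ^ (2 ^ k) = 1) → σ z = z)
    {ζp : K} (hζp : IsPrimitiveRoot ζp p) (hσζ : σ ζp = ζp ^ 2)
    (w : K) (hw : w ^ 2 = (p : K)) :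
    ((p % 8 = 1 ∨ p % 8 = 7) → σ w = w) ∧ ((p % 8 = 3 ∨ p % 8 = 5) → σ w = -w) := by
  classical
  have hp : p.Prime := Fact.out
  have hp2 : p ≠ 2 := by rcases hpodd with ⟨k, hk⟩; omega
  have hp3 : 3 ≤ p := by have := hp.two_le; rcases hpodd with ⟨k, hk⟩; omega
  have hchar2 : ringChar (ZMod p) ≠ 2 := by rw [ZMod.ringChar_zmod_n]; exact hp2
  set χ := (quadraticChar (ZMod p)).ringHomComp (Int.castRingHom K) with hχdef
  set ψ := AddChar.zmodChar p hζp.pow_eq_one with hψdef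
  set g := gaussSum χ ψ with hgdef
  obtain ⟨hg2, hg0, hqm1⟩ := gauss_basic hpodd hζp
  -- 2 as an element of ZMod p
  have hval2 : ((2 : ZMod p)).val = 2 := by
    have h := ZMod.val_natCast (n := p) 2
    rw [Nat.mod_eq_of_lt (by omega)] at h
    simpa using h
  have htu : IsUnit (2 : ZMod p) := by
    apply isUnit_iff_ne_zero.mpr
    intro h2
    have hdvd : (p : ℕ) ∣ 2 :=
      (ZMod.natCast_eq_zero_iff 2 p).mp (by simpa using h2)
    have := Nat.le_of_dvd (by norm_num) hdvd
    omega
  -- σ g = gaussSum χ (mulShift ψ 2)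
  have hmap := gauss_map hζp.pow_eq_one σ (2 : ZMod p) (by rw [hval2]; exact hσζ)
  have hshift := gaussSum_mulShift χ ψ htu.unit
  rw [IsUnit.unit_spec] at hshift
  have hσg : χ 2 * σ g = g := by rw [hgdef, hmap]; exact hshift
  have hχ2 : χ 2 = ((quadraticChar (ZMod p) 2 : ℤ) : K) := by
    simp [hχdef, MulChar.ringHomComp_apply]
  have hε : (quadraticChar (ZMod p) 2 : ℤ) = 1 ∨ (quadraticChar (ZMod p) 2 : ℤ) = -1 := by
    rcases quadraticChar_isQuadratic (ZMod p) 2 with h | h | h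
    · exact absurd (quadraticChar_eq_zero_iff.mp h) htu.ne_zero
    · exact Or.inl h
    · exact Or.inr h
  have hσg' : σ g = ((quadraticChar (ZMod p) 2 : ℤ) : K) * g := by
    rcases hε with h | h <;> rw [hχ2, h] at hσg <;> rw [h] <;> push_cast at hσg ⊢ <;>
      [linear_combination hσg; linear_combination -hσg]
  -- the ratio u = g / w is a 4th root of unity, hence fixed by σ
  have hpK : (p : K) ≠ 0 := Nat.cast_ne_zero.mpr hp.pos.ne'
  have hw0 : w ≠ 0 := by
    intro h; rw [h] at hw; simp at hw; exact hpK hw.symm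
  set u := g * w⁻¹ with hudef
  have hu2 : u ^ 2 = ((quadraticChar (ZMod p) (-1) : ℤ) : K) := by
    have h : u ^ 2 = g ^ 2 * (w ^ 2)⁻¹ := by rw [hudef]; field_simp
    rw [h, hgdef, hg2, hw]
    field_simp
  have hu4 : u ^ (2 ^ 2) = 1 := by
    have h : u ^ (2^2) = (u ^ 2) ^ 2 := by ring
    rw [h, hu2]
    rcases hqm1 with h' | h' <;> rw [h'] <;> push_cast <;> ring
  have hσu : σ u = u := hσ2 u ⟨2, hu4⟩
  have hu0 : u ≠ 0 := by
    intro h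
    rw [h] at hu2
    rcases hqm1 with hh | hh <;> rw [hh] at hu2 <;> simp at hu2
  have hgw : g = u * w := by rw [hudef]; field_simp
  have hkey : u * σ w = σ g := by rw [hgw, map_mul, hσu]
  have hσw : σ w = ((quadraticChar (ZMod p) 2 : ℤ) : K) * w :=
    mul_left_cancel₀ hu0 (by rw [hkey, hσg', hgw]; ring)
  -- evaluate the quadratic character at 2
  have hq2 : quadraticChar (ZMod p) 2 = ZMod.χ₈ p := by
    have h := quadraticChar_two (F := ZMod p) hchar2
    rwa [ZMod.card] at h
  have hmod2 : p % 2 = 1 := Nat.odd_iff.mp hpodd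
  have hv := ZMod.χ₈_nat_eq_if_mod_eight p
  constructor
  · intro hcase
    have : quadraticChar (ZMod p) 2 = 1 := by
      rw [hq2, hv, if_neg (by omega), if_pos hcase]
    rw [hσw, this]; push_cast; ring
  · intro hcase
    have : quadraticChar (ZMod p) 2 = -1 := by
      rw [hq2, hv, if_neg (by omega), if_neg (by omega)]
    rw [hσw, this]; push_cast; ring

end LemA

section LemB

lemma coprime_of_modeq_one {c k : ℕ} (h : c ≡ 1 [MOD k]) : Nat.Coprime c k := by
  have hk : (k : ℤ) ∣ (1 : ℤ) - c := h.dvd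
  have h1 : (Nat.gcd c k : ℤ) ∣ (1 : ℤ) - c :=
    dvd_trans (Int.natCast_dvd_natCast.mpr (Nat.gcd_dvd_right c k)) hk
  have h2 : (Nat.gcd c k : ℤ) ∣ (c : ℤ) := Int.natCast_dvd_natCast.mpr (Nat.gcd_dvd_left c k)
  have h3 : (Nat.gcd c k : ℤ) ∣ (1 : ℤ) := by
    have := dvd_add h1 h2
    simpa using this
  exact Nat.dvd_one.mp (by exact_mod_cast h3)

lemma lemB (p : ℕ) (hp : p.Prime) (hpodd : Odd p) (n : ℕ+)
    (w : CyclotomicField n ℚ) (hw : w ^ 2 = (p : CyclotomicField n ℚ)) : p ∣ (n : ℕ) := by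
  classical
  by_contra hpn
  haveI : Fact p.Prime := ⟨hp⟩
  have hp2 : p ≠ 2 := by rcases hpodd with ⟨k, hk⟩; omega
  have hp3 : 3 ≤ p := by have := hp.two_le; rcases hpodd with ⟨k, hk⟩; omega
  set pp : ℕ+ := ⟨p, hp.pos⟩ with hppdef
  set m : ℕ+ := 4 * n * pp with hmdef
  have hm : (m : ℕ) = 4 * (n : ℕ) * p := by rw [hmdef, PNat.mul_coe, PNat.mul_coe, hppdef]; rfl
  set L := CyclotomicField m ℚ with hLdef
  haveI : IsCyclotomicExtension {(m : ℕ)} ℚ L := CyclotomicField.isCyclotomicExtension _ _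
  have hη : IsPrimitiveRoot (IsCyclotomicExtension.zeta m ℚ L) m :=
    IsCyclotomicExtension.zeta_spec m ℚ L
  set η := IsCyclotomicExtension.zeta m ℚ L with hηdef
  -- roots of unity of the relevant orders
  have hζp : IsPrimitiveRoot (η ^ (4 * (n : ℕ))) p := hη.pow m.pos (by rw [hm])
  have hζn : IsPrimitiveRoot (η ^ (4 * p)) (n : ℕ) := hη.pow m.pos (by rw [hm]; ring)
  have hζ4 : IsPrimitiveRoot (η ^ ((n : ℕ) * p)) 4 := hη.pow m.pos (by rw [hm]; ring)
  -- embed K = ℚ(ζ_n) into L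
  haveI : IsCyclotomicExtension {(n : ℕ)} ℚ (CyclotomicField n ℚ) :=
    CyclotomicField.isCyclotomicExtension _ _
  haveI := IsCyclotomicExtension.splitting_field_cyclotomic n ℚ (CyclotomicField n ℚ)
  have hsplX : Splits ((X ^ (n : ℕ) - 1 : ℚ[X]).map (algebraMap ℚ L)) := by
    rw [Polynomial.map_sub, Polynomial.map_one, Polynomial.map_pow,
      Polynomial.map_X]
    simpa using X_pow_sub_one_splits hζn
  have hspl : Splits ((cyclotomic n ℚ).map (algebraMap ℚ L)) :=
    hsplX.of_dvd (Polynomial.map_ne_zero (by simpa using X_pow_sub_C_ne_zero n.pos (1 : ℚ)))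
      (Polynomial.map_dvd _ (by simpa using cyclotomic.dvd_X_pow_sub_one (n : ℕ) ℚ))
  set φ := IsSplittingField.lift (CyclotomicField n ℚ) (cyclotomic n ℚ) hspl with hφdef
  set s := φ w with hsdef
  have hs : s ^ 2 = (p : L) := by rw [hsdef, ← map_pow, hw, map_natCast]
  -- Gauss sum data
  set χ := (quadraticChar (ZMod p)).ringHomComp (Int.castRingHom L) with hχdef
  set ψ := AddChar.zmodChar p hζp.pow_eq_one with hψdef
  obtain ⟨hg2, hg0, hqm1⟩ := gauss_basic hpodd hζp
  set g := gaussSum χ ψ with hgdef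
  have hg0' : g ≠ 0 := by rw [hgdef]; exact hg0
  -- a quadratic nonresidue mod p
  have hchar2 : ringChar (ZMod p) ≠ 2 := by rw [ZMod.ringChar_zmod_n]; exact hp2
  obtain ⟨t, ht⟩ := quadraticChar_exists_neg_one hchar2
  have ht0 : t ≠ 0 := by
    intro h
    rw [quadraticChar_eq_zero_iff.mpr h] at ht
    norm_num at ht
  -- Chinese remainder: c ≡ 1 mod 4n, c ≡ t mod p
  have hco : Nat.Coprime (4 * (n : ℕ)) p := by
    rw [Nat.coprime_comm]
    refine hp.coprime_iff_not_dvd.mpr ?_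
    intro hdvd
    rcases (Nat.Prime.dvd_mul hp).mp hdvd with h4 | hn
    · have := hp.dvd_of_dvd_pow (n := 2) (m := 2) (by norm_num at h4 ⊢; exact h4)
      have := Nat.le_of_dvd (by norm_num) this
      omega
    · exact hpn hn
  obtain ⟨c, hc1, hc2⟩ := Nat.chineseRemainder hco 1 t.val
  have hcm : Nat.Coprime c (m : ℕ) := by
    rw [hm]
    refine Nat.Coprime.mul_right (coprime_of_modeq_one hc1) ?_
    rw [Nat.coprime_comm]
    refine hp.coprime_iff_not_dvd.mpr ?_
    intro hdvd
    have h0 : c % p = 0 := Nat.mod_eq_zero_of_dvd hdvd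
    have h1 : c % p = t.val % p := hc2
    have h2 : t.val < p := ZMod.val_lt t
    have h3 : t.val = 0 := by rw [h0] at h1; rw [Nat.mod_eq_of_lt h2] at h1; omega
    exact ht0 ((ZMod.val_eq_zero t).mp h3)
  -- the Galois automorphism τ : ζ_m ↦ ζ_m^c
  set mu := ZMod.unitOfCoprime c hcm with hmudef
  set τ := (IsCyclotomicExtension.autEquivPow L (Polynomial.cyclotomic.irreducible_rat m.pos)).symm
    mu with hτdef
  have happ : (IsCyclotomicExtension.autEquivPow L
      (Polynomial.cyclotomic.irreducible_rat m.pos)) τ = mu := by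
    rw [hτdef]; exact MulEquiv.apply_symm_apply _ _
  have hatp : hη.autToPow ℚ τ = mu := happ
  have hτη : τ η = η ^ c := by
    have hspec := hη.autToPow_spec ℚ τ
    rw [hatp] at hspec
    rw [← hspec, hmudef, ZMod.coe_unitOfCoprime, ZMod.val_natCast, ← pow_eq_pow_mod c
      hη.pow_eq_one]
  -- τ fixes all n-th roots of unity
  haveI : NeZero (n : ℕ) := ⟨n.pos.ne'⟩
  have hfixgen : ∀ (e r : ℕ), (m : ℕ) = e * r → c % r = 1 % r → τ (η ^ e) = η ^ e := by
    intro e r her hcr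
    have hre : (η ^ e) ^ r = 1 := (hη.pow m.pos her).pow_eq_one
    rw [map_pow, hτη, ← pow_mul, mul_comm c e, pow_mul, pow_eq_pow_mod c hre, hcr,
      ← pow_eq_pow_mod 1 hre, pow_one]
  have hfixn : ∀ z : L, z ^ (n : ℕ) = 1 → τ z = z := by
    intro z hz
    obtain ⟨i, -, hi⟩ := hζn.eq_pow_of_pow_eq_one hz
    have hcn : c % (n : ℕ) = 1 % (n : ℕ) := hc1.of_dvd (dvd_mul_left _ 4)
    rw [← hi, map_pow, hfixgen (4 * p) n (by rw [hm]; ring) hcn]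
  -- τ fixes the image of K, in particular s
  have hτs : τ s = s := by
    have hadj : Algebra.adjoin ℚ
        {b : CyclotomicField n ℚ | ∃ a : ℕ, a ∈ ({(n : ℕ)} : Set ℕ) ∧ a ≠ 0 ∧ b ^ a = 1} = ⊤ :=
      ((IsCyclotomicExtension.iff_adjoin_eq_top {(n : ℕ)} ℚ (CyclotomicField n ℚ)).mp
        inferInstance).2
    have heq : (τ.toAlgHom.comp φ) = φ := by
      refine AlgHom.ext_of_adjoin_eq_top hadj ?_
      rintro b ⟨a, ha, -, hb1⟩
      rw [Set.mem_singleton_iff] at ha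
      rw [ha] at hb1
      have : (φ b) ^ (n : ℕ) = 1 := by rw [← map_pow, hb1, map_one]
      simpa using hfixn (φ b) this
    rw [hsdef]
    exact DFunLike.congr_fun heq w
  -- τ multiplies the Gauss sum by χ(t) = -1
  have hτζp : τ (η ^ (4 * (n : ℕ))) = (η ^ (4 * (n : ℕ))) ^ t.val := by
    have hcp' : c % p = t.val % p := hc2
    have hre : (η ^ (4 * (n : ℕ))) ^ p = 1 := hζp.pow_eq_one
    rw [map_pow, hτη, ← pow_mul, mul_comm c _, pow_mul, pow_eq_pow_mod c hre, hcp',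
      ← pow_eq_pow_mod t.val hre]
  have hmap := gauss_map hζp.pow_eq_one (τ : L →+* L) t (by exact hτζp)
  have htu : IsUnit t := isUnit_iff_ne_zero.mpr ht0
  have hshift := gaussSum_mulShift χ ψ htu.unit
  rw [IsUnit.unit_spec] at hshift
  have hmap' : τ (gaussSum χ ψ) = gaussSum χ (ψ.mulShift t) := hmap
  have hτg : χ t * τ g = g := by rw [hgdef, hmap']; exact hshift
  have hχt : χ t = (-1 : L) := by
    rw [hχdef]
    simp [MulChar.ringHomComp_apply, ht]
  have hτg' : τ g = -g := by
    rw [hχt] at hτg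
    linear_combination -hτg
  -- but τ fixes g, since g = u₀ * s with u₀ a 4th root of unity
  have hpL : (p : L) ≠ 0 := Nat.cast_ne_zero.mpr hp.pos.ne'
  have hs0 : s ≠ 0 := by
    intro h; rw [h] at hs; simp at hs; exact hpL hs.symm
  set u0 := g * s⁻¹ with hu0def
  have hu02 : u0 ^ 2 = ((quadraticChar (ZMod p) (-1) : ℤ) : L) := by
    have h : u0 ^ 2 = g ^ 2 * (s ^ 2)⁻¹ := by rw [hu0def]; ring
    rw [h, hgdef, hg2, hs]
    rw [mul_assoc, mul_inv_cancel₀ hpL, mul_one]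
  have hu04 : u0 ^ 4 = 1 := by
    have h : u0 ^ 4 = (u0 ^ 2) ^ 2 := by ring
    rw [h, hu02]
    rcases hqm1 with h' | h' <;> rw [h'] <;> push_cast <;> ring
  obtain ⟨j, -, hj⟩ := hζ4.eq_pow_of_pow_eq_one hu04
  have hc4 : c % 4 = 1 % 4 := hc1.of_dvd (Dvd.intro (n : ℕ) rfl)
  have hτ4 : τ (η ^ ((n : ℕ) * p)) = η ^ ((n : ℕ) * p) :=
    hfixgen ((n : ℕ) * p) 4 (by rw [hm]; ring) hc4
  have hτu0 : τ u0 = u0 := by rw [← hj, map_pow, hτ4]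
  have hgs : g = u0 * s := by rw [hu0def, mul_assoc, inv_mul_cancel₀ hs0, mul_one]
  have hτgfix : τ g = g := by rw [hgs, map_mul, hτu0, hτs]
  rw [hτgfix] at hτg'
  have : (2 : L) * g = 0 := by linear_combination hτg'
  rcases mul_eq_zero.mp this with h | h
  · exact two_ne_zero h
  · exact hg0' h

end LemB

section MainAux

lemma odd_sq_mod8 (m : ℕ) (hm : m % 2 = 1) : m ^ 2 % 8 = 1 := by
  have h := Nat.pow_mod m 2 8
  have h8 : m % 8 < 8 := Nat.mod_lt _ (by norm_num)
  have h2 : m % 8 % 2 = 1 := by omega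
  have hcases : m % 8 = 1 ∨ m % 8 = 3 ∨ m % 8 = 5 ∨ m % 8 = 7 := by omega
  rcases hcases with h1 | h1 | h1 | h1 <;> rw [h, h1] <;> norm_num

lemma odd_pow_mod8 (p a : ℕ) (hp : p % 2 = 1) (ha : Odd a) : p ^ a % 8 = p % 8 := by
  obtain ⟨k, hk⟩ := ha
  have h1 : p ^ a = (p ^ k) ^ 2 * p := by rw [hk]; ring
  have hpk : p ^ k % 2 = 1 := Nat.odd_iff.mp (Nat.odd_iff.mpr hp |>.pow)
  rw [h1, Nat.mul_mod, odd_sq_mod8 _ hpk, one_mul]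
  omega

end MainAux

/-- Let `q` be a power of an odd prime, `ℓ ≥ 0`, `K = ℚ(ζ_n)`, and `σ ∈ Gal(K/ℚ)` an
automorphism fixing every root of unity of `2`-power order and squaring every root of unity of
odd order.  If `x ∈ K` satisfies `x² = q^ℓ`, then `σ x = x` when `q ≡ ±1 (mod 8)`, and
`σ x = (-1)^ℓ · x` when `q ≡ ±3 (mod 8)`. -/
theorem galois_action_on_square_roots_of_odd_prime_powers
    (p a : ℕ) (hp : p.Prime) (hpodd : Odd p) (ha : 0 < a) (q : ℕ) (hq : q = p ^ a)
    (ℓ : ℕ) (n : ℕ+)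
    (σ : CyclotomicField n ℚ ≃ₐ[ℚ] CyclotomicField n ℚ)
    (hσ2 : ∀ z : CyclotomicField n ℚ, (∃ k : ℕ, z ^ (2 ^ k) = 1) → σ z = z)
    (hσodd : ∀ z : CyclotomicField n ℚ, (∃ k : ℕ, Odd k ∧ z ^ k = 1) → σ z = z ^ 2)
    (x : CyclotomicField n ℚ) (hx : x ^ 2 = (q : CyclotomicField n ℚ) ^ ℓ) :
    ((q % 8 = 1 ∨ q % 8 = 7) → σ x = x) ∧
    ((q % 8 = 3 ∨ q % 8 = 5) → σ x = (-1) ^ ℓ * x) := by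
  classical
  subst hq
  haveI : Fact p.Prime := ⟨hp⟩
  have hp2 : p % 2 = 1 := Nat.odd_iff.mp hpodd
  have hpK : (p : CyclotomicField n ℚ) ≠ 0 := Nat.cast_ne_zero.mpr hp.pos.ne'
  have hx' : x ^ 2 = (p : CyclotomicField n ℚ) ^ (a * ℓ) := by
    rw [hx]; push_cast; rw [← pow_mul]
  rcases Nat.even_or_odd (a * ℓ) with hN | hN
  · -- `x` is (up to sign) a rational number, fixed by `σ`
    obtain ⟨k, hk⟩ := hN
    have hxx : x ^ 2 = ((p : CyclotomicField n ℚ) ^ k) ^ 2 := by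
      rw [hx', hk, show k + k = k * 2 from by ring, pow_mul]
    have hfix : σ ((p : CyclotomicField n ℚ) ^ k) = (p : CyclotomicField n ℚ) ^ k := by
      rw [map_pow, map_natCast]
    have hσx : σ x = x := by
      rcases my_sq_cases hxx with h | h <;> rw [h]
      · exact hfix
      · rw [map_neg, hfix]
    constructor
    · intro _; exact hσx
    · intro hcase
      rcases Nat.even_or_odd ℓ with hℓ | hℓ
      · rw [Even.neg_one_pow hℓ, one_mul]; exact hσx
      · exfalso
        have haeven : Even a := by
          rcases Nat.even_or_odd a with h | h
          · exact h
          · exact absurd (Nat.odd_mul.mpr ⟨h, hℓ⟩) (Nat.not_odd_iff_even.mpr ⟨k, hk⟩)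
        obtain ⟨b, hb⟩ := haeven
        have hsq : p ^ a = (p ^ b) ^ 2 := by rw [hb]; ring
        have h1 : p ^ a % 8 = 1 := by
          rw [hsq]; exact odd_sq_mod8 _ (Nat.odd_iff.mp (hpodd.pow))
        omega
  · -- reduce to a square root of `p`
    obtain ⟨hA, hL⟩ : Odd a ∧ Odd ℓ := Nat.odd_mul.mp hN
    obtain ⟨k, hk⟩ := hN
    set cK := (p : CyclotomicField n ℚ) ^ k with hcKdef
    have hcK0 : cK ≠ 0 := pow_ne_zero _ hpK
    have hw : (x * cK⁻¹) ^ 2 = (p : CyclotomicField n ℚ) := by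
      have h1 : cK ^ 2 = (p : CyclotomicField n ℚ) ^ (2 * k) := by
        rw [hcKdef, ← pow_mul, mul_comm]
      rw [mul_pow, hx', hk, inv_pow, h1, pow_succ]
      field_simp
    set w := x * cK⁻¹ with hwdef
    -- p divides n, giving a primitive p-th root of unity in the field
    have hpn : p ∣ (n : ℕ) := lemB p hp hpodd n w hw
    obtain ⟨d, hd⟩ := hpn
    haveI : IsCyclotomicExtension {(n : ℕ)} ℚ (CyclotomicField n ℚ) :=
      CyclotomicField.isCyclotomicExtension _ _
    have hζK : IsPrimitiveRoot (IsCyclotomicExtension.zeta n ℚ (CyclotomicField n ℚ)) n :=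
      IsCyclotomicExtension.zeta_spec n ℚ (CyclotomicField n ℚ)
    have hζp : IsPrimitiveRoot (IsCyclotomicExtension.zeta n ℚ (CyclotomicField n ℚ) ^ d) p :=
      hζK.pow n.pos (by rw [hd, mul_comm])
    have hσζ : σ (IsCyclotomicExtension.zeta n ℚ (CyclotomicField n ℚ) ^ d) =
        (IsCyclotomicExtension.zeta n ℚ (CyclotomicField n ℚ) ^ d) ^ 2 :=
      hσodd _ ⟨p, hpodd, hζp.pow_eq_one⟩
    obtain ⟨hc17, hc35⟩ := lemA p hpodd (σ : CyclotomicField n ℚ →+* CyclotomicField n ℚ)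
      (fun z hz => hσ2 z hz) hζp hσζ w hw
    have hxw : x = w * cK := by rw [hwdef]; field_simp
    have hσcK : σ cK = cK := by rw [hcKdef, map_pow, map_natCast]
    have hmod : p ^ a % 8 = p % 8 := odd_pow_mod8 p a hp2 hA
    constructor
    · intro hcase
      have hp8 : p % 8 = 1 ∨ p % 8 = 7 := by omega
      have hσw : σ w = w := hc17 hp8
      rw [hxw, map_mul, hσw, hσcK]
    · intro hcase
      have hp8 : p % 8 = 3 ∨ p % 8 = 5 := by omega
      have hσw : σ w = -w := hc35 hp8
      rw [hxw, map_mul, hσw, hσcK, Odd.neg_one_pow hL]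
      ring
end
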